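/- Let κ > 0 and M_S(-κ) M_D(κ) < 1, and define Δ* = (1/κ) ln(1/(M_S(-κ)M_D(κ))). If (1/κ) ln(1/(M_D(κ) M_S(-κ))) + E[D] + E[max(S - D, 0)] < (1/κ) P(S - D ≤ 0), then on [0, Δ*] the function h(Δ) := Δ + E[D] + E[W(Δ)] - (1/κ) P(S - D ≤ Δ) is negative, and consequently the surrogate reward G_sur(Δ) = M_S(-κ)² M_D(κ) e^{κΔ} / (Δ + E[D] + E[W(Δ)]) is strictly decreasing on [0, Δ*], so Δ = 0 maximizes G_sur over [0, ∞). -/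

import Mathlib

open MeasureTheory ProbabilityTheory Set Real

lemma intW {Ω : Type*} [MeasurableSpace Ω] (μ : Measure Ω) [IsProbabilityMeasure μ]
    {S D : Ω → ℝ} (hSm : Measurable S) (hDm : Measurable D)
    (hS0 : ∀ ω, 0 ≤ S ω) (hD0 : ∀ ω, 0 ≤ D ω) (hSint : Integrable S μ) (Δ : ℝ) :
    Integrable (fun ω => max (S ω - Δ - D ω) 0) μ := by
  refine Integrable.mono' (hSint.add (integrable_const |Δ|))
    (((hSm.sub measurable_const).sub hDm).max measurable_const).aestronglyMeasurable
    (Filter.Eventually.of_forall fun ω => ?_)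
  simp only [Pi.add_apply]
  have h1 : (0:ℝ) ≤ max (S ω - Δ - D ω) 0 := le_max_right _ _
  rw [Real.norm_eq_abs, abs_of_nonneg h1]
  have := hS0 ω; have := hD0 ω
  rcases le_or_gt (S ω - Δ - D ω) 0 with h | h
  · simp only [max_eq_right h]; positivity
  · rw [max_eq_left h.le]
    have := neg_abs_le Δ
    linarith

lemma Wderiv {Ω : Type*} [MeasurableSpace Ω] (μ : Measure Ω) [IsProbabilityMeasure μ]
    {S D : Ω → ℝ} (hSm : Measurable S) (hDm : Measurable D)
    (hS0 : ∀ ω, 0 ≤ S ω) (hD0 : ∀ ω, 0 ≤ D ω) (hSint : Integrable S μ)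
    (hcont : ∀ x : ℝ, μ {ω | S ω - D ω = x} = 0) (Δ0 : ℝ) :
    HasDerivAt (fun Δ => ∫ ω, max (S ω - Δ - D ω) 0 ∂μ)
      (-(μ {ω | Δ0 < S ω - D ω}).toReal) Δ0 := by
  set s : Set Ω := {ω | Δ0 < S ω - D ω} with hs
  have hsm : MeasurableSet s := measurableSet_lt measurable_const (hSm.sub hDm)
  have key := hasDerivAt_integral_of_dominated_loc_of_lip (F := fun Δ ω => max (S ω - Δ - D ω) 0)
    (F' := s.indicator fun _ => (-1 : ℝ)) (x₀ := Δ0) (s := Metric.ball Δ0 1) (bound := fun _ => 1)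
    (Metric.ball_mem_nhds Δ0 one_pos)
    (Filter.Eventually.of_forall fun x =>
      ((((hSm.sub measurable_const).sub hDm).max measurable_const).aestronglyMeasurable))
    (intW μ hSm hDm hS0 hD0 hSint Δ0)
    ((measurable_const.indicator hsm).aestronglyMeasurable)
    (Filter.Eventually.of_forall fun ω => ?_)
    (integrable_const 1)
    ?_
  · have : ∫ ω, s.indicator (fun _ => (-1:ℝ)) ω ∂μ = -(μ s).toReal := by
      rw [integral_indicator_const _ hsm]; simp [Measure.real]
    rw [this] at key
    exact key.2
  · -- Lipschitz
    have hone : Real.nnabs (1:ℝ) = 1 := by simp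
    rw [hone]
    refine LipschitzWith.lipschitzOnWith (LipschitzWith.of_dist_le_mul fun x y => ?_)
    simp only [Real.dist_eq, NNReal.coe_one, one_mul]
    have : S ω - x - D ω = (S ω - D ω) - x := by ring
    have h2 : S ω - y - D ω = (S ω - D ω) - y := by ring
    rw [this, h2]
    calc |max (S ω - D ω - x) 0 - max (S ω - D ω - y) 0| ≤ |(S ω - D ω - x) - (S ω - D ω - y)| :=
        abs_max_sub_max_le_abs _ _ _
      _ = |x - y| := by rw [abs_sub_comm]; ring_nf
  · -- a.e. differentiability
    have hne : ∀ᵐ ω ∂μ, S ω - D ω ≠ Δ0 := by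
      rw [ae_iff]
      simpa using hcont Δ0
    filter_upwards [hne] with ω hω
    rcases lt_or_gt_of_ne hω with h | h
    · -- S ω - D ω < Δ0 : locally zero, derivative 0
      have hind : s.indicator (fun _ => (-1:ℝ)) ω = 0 := by
        apply Set.indicator_of_notMem
        simp only [hs, mem_setOf_eq, not_lt]; linarith
      rw [hind]
      have : (fun Δ => max (S ω - Δ - D ω) 0) =ᶠ[nhds Δ0] fun _ => (0:ℝ) := by
        have : ∀ᶠ Δ in nhds Δ0, S ω - D ω < Δ := Filter.Tendsto.eventually_const_lt h Filter.tendsto_id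
        filter_upwards [this] with Δ hΔ
        rw [max_eq_right]; linarith
      exact (hasDerivAt_const Δ0 (0:ℝ)).congr_of_eventuallyEq this
    · -- Δ0 < S ω - D ω : locally affine, derivative -1
      have hind : s.indicator (fun _ => (-1:ℝ)) ω = -1 :=
        Set.indicator_of_mem (show ω ∈ s from h) _
      rw [hind]
      have hev : (fun Δ => max (S ω - Δ - D ω) 0) =ᶠ[nhds Δ0] fun Δ => S ω - Δ - D ω := by
        have : ∀ᶠ Δ in nhds Δ0, Δ < S ω - D ω := Filter.Tendsto.eventually_lt_const h Filter.tendsto_id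
        filter_upwards [this] with Δ hΔ
        rw [max_eq_left]; linarith
      have hd : HasDerivAt (fun Δ : ℝ => S ω - Δ - D ω) (-1) Δ0 := by
        simpa using (((hasDerivAt_id Δ0).const_sub (S ω)).sub_const (D ω))
      exact hd.congr_of_eventuallyEq hev

/-- Theorem 2, case 2, sufficient condition: With
`Δ* = (1/κ) ln (1/(M_S(-κ) M_D(κ)))`, if
`(1/κ) ln (1/(M_D(κ) M_S(-κ))) + E[D] + E[max (S-D) 0] < (1/κ) P(S - D ≤ 0)`,
then `h(Δ) = Δ + E[D] + E[W(Δ)] - (1/κ) P(S - D ≤ Δ)` is negative on `[0, Δ*]`,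
the surrogate reward `M_S(-κ)² M_D(κ) e^{κΔ} / (Δ + E[D] + E[W(Δ)])` is strictly
decreasing on `[0, Δ*]`, and `Δ = 0` maximizes the surrogate reward over `[0, ∞)`. -/
theorem stmt9 {Ω : Type*} [MeasurableSpace Ω] (μ : Measure Ω) [IsProbabilityMeasure μ]
    (S D : Ω → ℝ) (κ : ℝ) (hκ : 0 < κ)
    (hSm : Measurable S) (hDm : Measurable D)
    (hS0 : ∀ ω, 0 ≤ S ω) (hD0 : ∀ ω, 0 ≤ D ω)
    (hInd : IndepFun S D μ)
    (hSint : Integrable S μ) (hDint : Integrable D μ)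
    (hMDint : Integrable (fun ω => Real.exp (κ * D ω)) μ)
    (hcont : ∀ x : ℝ, μ {ω | S ω - D ω = x} = 0)
    (hMSMD : (∫ ω, Real.exp (-κ * S ω) ∂μ) * (∫ ω, Real.exp (κ * D ω) ∂μ) < 1)
    (hden : ∀ Δ : ℝ, 0 ≤ Δ →
      0 < Δ + (∫ ω, D ω ∂μ) + ∫ ω, max (S ω - Δ - D ω) 0 ∂μ)
    (hcond : (1 / κ) * Real.log (1 /
          ((∫ ω, Real.exp (κ * D ω) ∂μ) * (∫ ω, Real.exp (-κ * S ω) ∂μ)))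
        + (∫ ω, D ω ∂μ) + (∫ ω, max (S ω - D ω) 0 ∂μ)
      < (1 / κ) * (μ {ω | S ω - D ω ≤ 0}).toReal) :
    (∀ Δ ∈ Icc (0:ℝ) ((1 / κ) * Real.log (1 /
        ((∫ ω, Real.exp (-κ * S ω) ∂μ) * (∫ ω, Real.exp (κ * D ω) ∂μ)))),
      Δ + (∫ ω, D ω ∂μ) + (∫ ω, max (S ω - Δ - D ω) 0 ∂μ)
        - (1 / κ) * (μ {ω | S ω - D ω ≤ Δ}).toReal < 0) ∧
    StrictAntiOn (fun Δ : ℝ =>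
      (∫ ω, Real.exp (-κ * S ω) ∂μ) ^ 2 * (∫ ω, Real.exp (κ * D ω) ∂μ) *
          Real.exp (κ * Δ) /
        (Δ + (∫ ω, D ω ∂μ) + ∫ ω, max (S ω - Δ - D ω) 0 ∂μ))
      (Icc (0:ℝ) ((1 / κ) * Real.log (1 /
        ((∫ ω, Real.exp (-κ * S ω) ∂μ) * (∫ ω, Real.exp (κ * D ω) ∂μ))))) ∧
    (∀ Δ : ℝ, 0 ≤ Δ →
      (∫ ω, Real.exp (-κ * S ω) ∂μ) *
          min ((∫ ω, Real.exp (-κ * S ω) ∂μ) * Real.exp (κ * Δ) *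
              (∫ ω, Real.exp (κ * D ω) ∂μ)) 1 /
          (Δ + (∫ ω, D ω ∂μ) + ∫ ω, max (S ω - Δ - D ω) 0 ∂μ)
        ≤ (∫ ω, Real.exp (-κ * S ω) ∂μ) *
          min ((∫ ω, Real.exp (-κ * S ω) ∂μ) * (∫ ω, Real.exp (κ * D ω) ∂μ)) 1 /
          ((∫ ω, D ω ∂μ) + ∫ ω, max (S ω - D ω) 0 ∂μ)) := by
  have haint : Integrable (fun ω => Real.exp (-κ * S ω)) μ := by
    refine Integrable.mono' (integrable_const 1)
      ((measurable_const.mul hSm).exp.aestronglyMeasurable)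
      (Filter.Eventually.of_forall fun ω => ?_)
    rw [Real.norm_eq_abs, abs_of_pos (Real.exp_pos _)]
    exact Real.exp_le_one_iff.mpr (by nlinarith [hS0 ω])
  set a := ∫ ω, Real.exp (-κ * S ω) ∂μ with ha
  set b := ∫ ω, Real.exp (κ * D ω) ∂μ with hb
  set ED := ∫ ω, D ω ∂μ with hED
  have ha0 : 0 < a := integral_exp_pos haint
  have hb0 : 0 < b := integral_exp_pos hMDint
  have hab0 : 0 < a * b := mul_pos ha0 hb0
  set Δs : ℝ := (1 / κ) * Real.log (1 / (a * b)) with hΔs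
  have hΔs0 : 0 < Δs := by
    apply mul_pos (by positivity)
    exact Real.log_pos ((one_lt_div hab0).mpr (by simpa using hMSMD))
  have hexps : Real.exp (κ * Δs) = 1 / (a * b) := by
    rw [hΔs]
    rw [show κ * ((1/κ) * Real.log (1/(a*b))) = Real.log (1/(a*b)) by field_simp]
    exact Real.exp_log (by positivity)
  -- notation for p
  set p : ℝ → ℝ := fun Δ => (μ {ω | S ω - D ω ≤ Δ}).toReal with hp
  have hp01 : ∀ Δ, 0 ≤ p Δ ∧ p Δ ≤ 1 := fun Δ =>
    ⟨ENNReal.toReal_nonneg, by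
      simp only [hp]
      exact ENNReal.toReal_le_of_le_ofReal one_pos.le (by simpa using prob_le_one)⟩
  have hpmono : ∀ x y : ℝ, x ≤ y → p x ≤ p y := by
    intro x y hxy
    apply ENNReal.toReal_mono (measure_ne_top μ _)
    exact measure_mono fun ω hω => le_trans hω hxy
  have hW00 : (∫ ω, max (S ω - 0 - D ω) 0 ∂μ) = ∫ ω, max (S ω - D ω) 0 ∂μ := by
    simp only [sub_zero]
  have hWanti : ∀ x y : ℝ, x ≤ y →
      (∫ ω, max (S ω - y - D ω) 0 ∂μ) ≤ ∫ ω, max (S ω - x - D ω) 0 ∂μ := by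
    intro x y hxy
    exact integral_mono (intW μ hSm hDm hS0 hD0 hSint y) (intW μ hSm hDm hS0 hD0 hSint x)
      (fun ω => max_le_max (by linarith) le_rfl)
  -- Part 1
  have part1 : ∀ Δ ∈ Icc (0:ℝ) Δs,
      Δ + ED + (∫ ω, max (S ω - Δ - D ω) 0 ∂μ) - (1 / κ) * p Δ < 0 := by
    intro Δ hΔ
    rw [mul_comm b a] at hcond
    have h1 : (∫ ω, max (S ω - Δ - D ω) 0 ∂μ) ≤ ∫ ω, max (S ω - D ω) 0 ∂μ := by
      rw [← hW00]; exact hWanti 0 Δ hΔ.1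
    have h2 : p 0 ≤ p Δ := hpmono 0 Δ hΔ.1
    have h3 := hΔ.2
    rw [hΔs] at h3
    have hκ' : 0 < 1 / κ := by positivity
    nlinarith [mul_le_mul_of_nonneg_left h2 hκ'.le]
  -- derivative of the denominator
  have hdenD : ∀ x : ℝ, HasDerivAt (fun Δ => Δ + ED + ∫ ω, max (S ω - Δ - D ω) 0 ∂μ) (p x) x := by
    intro x
    have h1 := Wderiv μ hSm hDm hS0 hD0 hSint hcont x
    have h2 := ((hasDerivAt_id x).add_const ED).add h1
    have h3 : (1 : ℝ) + -(μ {ω | x < S ω - D ω}).toReal = p x := by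
      have hc : {ω | x < S ω - D ω} = {ω | S ω - D ω ≤ x}ᶜ := by
        ext ω; simp only [mem_setOf_eq, mem_compl_iff, not_le]
      have hms : MeasurableSet {ω | S ω - D ω ≤ x} :=
        measurableSet_le (hSm.sub hDm) measurable_const
      rw [hc, measure_compl hms (measure_ne_top μ _), measure_univ]
      rw [ENNReal.toReal_sub_of_le prob_le_one ENNReal.one_ne_top]
      simp [hp]
    rw [h3] at h2
    exact h2
  have hdenMono : Monotone (fun Δ : ℝ => Δ + ED + ∫ ω, max (S ω - Δ - D ω) 0 ∂μ) := by
    apply monotone_of_deriv_nonneg (fun x => (hdenD x).differentiableAt)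
    intro x
    rw [(hdenD x).deriv]
    exact (hp01 x).1
  -- derivative of G
  have hGD : ∀ x : ℝ, 0 ≤ x → HasDerivAt
      (fun Δ : ℝ => a ^ 2 * b * Real.exp (κ * Δ) /
        (Δ + ED + ∫ ω, max (S ω - Δ - D ω) 0 ∂μ))
      ((a ^ 2 * b * (Real.exp (κ * x) * κ) * (x + ED + ∫ ω, max (S ω - x - D ω) 0 ∂μ)
        - a ^ 2 * b * Real.exp (κ * x) * p x) /
        (x + ED + ∫ ω, max (S ω - x - D ω) 0 ∂μ) ^ 2) x := by
    intro x hx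
    have hnum : HasDerivAt (fun Δ : ℝ => a ^ 2 * b * Real.exp (κ * Δ))
        (a ^ 2 * b * (Real.exp (κ * x) * κ)) x := by
      have h1 : HasDerivAt (fun Δ : ℝ => κ * Δ) κ x := by
        simpa using (hasDerivAt_id x).const_mul κ
      exact (h1.exp).const_mul _
    exact hnum.div (hdenD x) (ne_of_gt (hden x hx))
  -- Part 2
  have part2 : StrictAntiOn (fun Δ : ℝ => a ^ 2 * b * Real.exp (κ * Δ) /
        (Δ + ED + ∫ ω, max (S ω - Δ - D ω) 0 ∂μ)) (Icc (0:ℝ) Δs) := by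
    apply strictAntiOn_of_deriv_neg (convex_Icc _ _)
    · apply ContinuousOn.div
      · exact (continuous_const.mul (Real.continuous_exp.comp
          (continuous_const.mul continuous_id))).continuousOn
      · have hdd : Differentiable ℝ (fun Δ : ℝ => Δ + ED + ∫ ω, max (S ω - Δ - D ω) 0 ∂μ) :=
          fun x => (hdenD x).differentiableAt
        exact hdd.continuous.continuousOn
      · exact fun x hx => ne_of_gt (hden x hx.1)
    · intro x hx
      rw [interior_Icc] at hx
      rw [(hGD x hx.1.le).deriv]
      have hpx := part1 x ⟨hx.1.le, hx.2.le⟩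
      have hd0 := hden x hx.1.le
      have hlt : κ * (x + ED + ∫ ω, max (S ω - x - D ω) 0 ∂μ) - p x < 0 := by
        rw [sub_neg]
        have h2 : x + ED + (∫ ω, max (S ω - x - D ω) 0 ∂μ) < (1/κ) * p x := by linarith
        calc κ * (x + ED + ∫ ω, max (S ω - x - D ω) 0 ∂μ) < κ * ((1/κ) * p x) :=
            mul_lt_mul_of_pos_left h2 hκ
          _ = p x := by field_simp
      have hrw : a ^ 2 * b * (Real.exp (κ * x) * κ) * (x + ED + ∫ ω, max (S ω - x - D ω) 0 ∂μ)
          - a ^ 2 * b * Real.exp (κ * x) * p x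
          = (a ^ 2 * b * Real.exp (κ * x)) *
            (κ * (x + ED + ∫ ω, max (S ω - x - D ω) 0 ∂μ) - p x) := by ring
      rw [hrw]
      apply div_neg_of_neg_of_pos
      · exact mul_neg_of_pos_of_neg (by positivity) hlt
      · positivity
  refine ⟨part1, part2, ?_⟩
  -- Part 3
  intro Δ hΔ
  rw [min_eq_left hMSMD.le]
  have hden0 : (0:ℝ) < ED + ∫ ω, max (S ω - D ω) 0 ∂μ := by
    have := hden 0 le_rfl; rw [hW00] at this; linarith
  have hG0 : a ^ 2 * b * Real.exp (κ * 0) /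
      ((0:ℝ) + ED + ∫ ω, max (S ω - 0 - D ω) 0 ∂μ)
      = a * (a * b) / (ED + ∫ ω, max (S ω - D ω) 0 ∂μ) := by
    rw [hW00, mul_zero, Real.exp_zero, mul_one, zero_add]; ring
  rcases le_or_gt Δ Δs with hcase | hcase
  · -- Δ ≤ Δs : min is a * exp(κΔ) * b
    have hmin : a * Real.exp (κ * Δ) * b ≤ 1 := by
      have : Real.exp (κ * Δ) ≤ Real.exp (κ * Δs) :=
        Real.exp_le_exp.mpr (by nlinarith)
      rw [hexps] at this
      calc a * Real.exp (κ * Δ) * b ≤ a * (1/(a*b)) * b := by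
            nlinarith [mul_nonneg (mul_nonneg ha0.le hb0.le)
              (sub_nonneg.mpr this), Real.exp_pos (κ * Δ)]
        _ = 1 := by field_simp
    rw [min_eq_left hmin]
    have key : a ^ 2 * b * Real.exp (κ * Δ) / (Δ + ED + ∫ ω, max (S ω - Δ - D ω) 0 ∂μ)
        ≤ a ^ 2 * b * Real.exp (κ * 0) / ((0:ℝ) + ED + ∫ ω, max (S ω - 0 - D ω) 0 ∂μ) := by
      rcases eq_or_lt_of_le hΔ with h | h
      · rw [← h]
      · exact le_of_lt (part2 ⟨le_rfl, hΔs0.le⟩ ⟨hΔ, hcase⟩ h)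
    rw [hG0] at key
    calc a * (a * Real.exp (κ * Δ) * b) / (Δ + ED + ∫ ω, max (S ω - Δ - D ω) 0 ∂μ)
        = a ^ 2 * b * Real.exp (κ * Δ) / (Δ + ED + ∫ ω, max (S ω - Δ - D ω) 0 ∂μ) := by
          congr 1; ring
      _ ≤ _ := key
  · -- Δs < Δ : min is 1
    have hmin : (1:ℝ) ≤ a * Real.exp (κ * Δ) * b := by
      have : Real.exp (κ * Δs) ≤ Real.exp (κ * Δ) :=
        Real.exp_le_exp.mpr (by nlinarith)
      rw [hexps] at this
      calc (1:ℝ) = a * (1/(a*b)) * b := by field_simp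
        _ ≤ a * Real.exp (κ * Δ) * b := by
            nlinarith [mul_nonneg (mul_nonneg ha0.le hb0.le) (sub_nonneg.mpr this)]
    rw [min_eq_right hmin]
    have hds := hden Δs hΔs0.le
    have hmono := hdenMono hcase.le
    simp only at hmono
    have step1 : a * 1 / (Δ + ED + ∫ ω, max (S ω - Δ - D ω) 0 ∂μ)
        ≤ a / (Δs + ED + ∫ ω, max (S ω - Δs - D ω) 0 ∂μ) := by
      rw [mul_one]
      exact div_le_div_of_nonneg_left ha0.le hds hmono
    have step2 : a / (Δs + ED + ∫ ω, max (S ω - Δs - D ω) 0 ∂μ)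
        = a ^ 2 * b * Real.exp (κ * Δs) / (Δs + ED + ∫ ω, max (S ω - Δs - D ω) 0 ∂μ) := by
      rw [hexps]
      congr 1
      field_simp
    have step3 : a ^ 2 * b * Real.exp (κ * Δs) / (Δs + ED + ∫ ω, max (S ω - Δs - D ω) 0 ∂μ)
        ≤ a ^ 2 * b * Real.exp (κ * 0) / ((0:ℝ) + ED + ∫ ω, max (S ω - 0 - D ω) 0 ∂μ) :=
      le_of_lt (part2 ⟨le_rfl, hΔs0.le⟩ ⟨hΔs0.le, le_rfl⟩ hΔs0)
    rw [hG0] at step3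
    calc a * 1 / (Δ + ED + ∫ ω, max (S ω - Δ - D ω) 0 ∂μ)
        ≤ a / (Δs + ED + ∫ ω, max (S ω - Δs - D ω) 0 ∂μ) := step1
      _ = _ := step2
      _ ≤ _ := step3
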